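/- Let F be a field, n ≥ 1, and let I be a nonzero monomial ideal of F[X_1,...,X_n] such that the quotient F[X_1,...,X_n]/I has finite dimension K ≥ 1 over F. Let G be the minimal monomial generating set of I, i.e., the set of exponent vectors a ∈ ℕⁿ such that the monomial X^a lies in I but X^a/X_i ∉ I for every index i with a_i > 0. Then |G| ≤ (n−1)K + 1. -/

import Mathlib

open MvPolynomial

/-- An ideal of `F[X_1,…,X_n]` is a *monomial ideal* if it is generated by
a set of monomials `X^a = X_1^{a_1} ⋯ X_n^{a_n}`. -/
def IsMonomialIdeal {n : ℕ} {F : Type} [Field F] (I : Ideal (MvPolynomial (Fin n) F)) : Prop :=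
  ∃ S : Set (Fin n →₀ ℕ), I = Ideal.span ((fun a => (monomial a (1 : F))) '' S)


/-- The minimal monomial generating set of a monomial ideal \`I\`, described by exponent
vectors: those \`a\` with \`X^a ∈ I\` such that \`X^a / X_i ∉ I\` for every \`i\` with \`a_i > 0\`. -/
def minGenSet {n : ℕ} {F : Type} [Field F] (I : Ideal (MvPolynomial (Fin n) F)) :
    Set (Fin n →₀ ℕ) :=
  {a | (monomial a (1 : F)) ∈ I ∧
    ∀ i, 0 < a i → (monomial (a - Finsupp.single i 1) (1 : F)) ∉ I}


/-- minimal elements of `U` in the sense of the problem. -/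
def MinF {n : ℕ} (U : Set (Fin n → ℕ)) : Set (Fin n → ℕ) :=
  {x | x ∈ U ∧ ∀ i, 0 < x i → x - Pi.single i 1 ∉ U}

lemma minF_antichain {n : ℕ} {U : Set (Fin n → ℕ)}
    (hU : ∀ x ∈ U, ∀ y, x ≤ y → y ∈ U) {x y : Fin n → ℕ}
    (hx : x ∈ MinF U) (hy : y ∈ MinF U) (hle : x ≤ y) : x = y := by
  by_contra hne
  have : ∃ i, x i < y i := by
    by_contra h
    push_neg at h
    exact hne (le_antisymm hle (fun i => h i))
  obtain ⟨i, hi⟩ := this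
  have hxle : x ≤ y - Pi.single i 1 := by
    intro j
    by_cases hj : j = i
    · subst hj; simp only [Pi.sub_apply, Pi.single_eq_same]; omega
    · simp only [Pi.sub_apply, Pi.single_apply, if_neg hj, Nat.sub_zero]
      exact hle j
  exact hy.2 i (lt_of_le_of_lt (Nat.zero_le _) hi) (hU x hx.1 _ hxle)

lemma minF_subsingleton_card {n : ℕ} (hn : n ≤ 1) {U : Set (Fin n → ℕ)}
    (hU : ∀ x ∈ U, ∀ y, x ≤ y → y ∈ U) :
    (MinF U).Finite ∧ (MinF U).ncard ≤ 1 := by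
  have hss : (MinF U).Subsingleton := by
    intro x hx y hy
    rcases Nat.eq_zero_or_pos n with h0 | h1
    · subst h0; exact funext (fun i => Fin.elim0 i)
    · have hn1 : n = 1 := le_antisymm hn h1
      subst hn1
      rcases le_total (x 0) (y 0) with h | h
      · exact minF_antichain hU hx hy (fun i => by rw [Fin.fin_one_eq_zero i]; exact h)
      · exact (minF_antichain hU hy hx (fun i => by rw [Fin.fin_one_eq_zero i]; exact h)).symm
  exact ⟨hss.finite, (Set.ncard_le_one hss.finite).2 (fun a ha b hb => hss ha hb)⟩

lemma comb_main : ∀ (n : ℕ) (U : Set (Fin n → ℕ)),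
    (∀ x ∈ U, ∀ y, x ≤ y → y ∈ U) → Uᶜ.Finite →
    (MinF U).Finite ∧ (MinF U).ncard ≤ (n - 1) * Uᶜ.ncard + 1 := by
  intro n
  induction n with
  | zero => intro U hU _; simpa using minF_subsingleton_card (by norm_num) hU
  | succ n IH =>
    intro U hU hfin
    rcases Nat.eq_zero_or_pos n with h0 | hn1
    · subst h0
      simpa using minF_subsingleton_card (le_refl 1) hU
    -- the main step, n ≥ 1
    set sn : (Fin n → ℕ) → (Fin (n+1) → ℕ) := fun b => Fin.snoc b 0 with hsn
    have hsninj : Function.Injective sn := by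
      intro b b' h
      funext j
      have := congrFun h (Fin.castSucc j)
      simpa [hsn, Fin.snoc_castSucc] using this
    set U0 : Set (Fin n → ℕ) := sn ⁻¹' U with hU0def
    have hU0 : ∀ x ∈ U0, ∀ y, x ≤ y → y ∈ U0 := by
      intro b hb b' hbb'
      refine hU (sn b) hb (sn b') ?_
      intro k
      induction k using Fin.lastCases with
      | last => simp [hsn, Fin.snoc_last]
      | cast j => simpa [hsn, Fin.snoc_castSucc] using hbb' j
    have hcompl : U0ᶜ = sn ⁻¹' Uᶜ := rfl
    have hfin0 : U0ᶜ.Finite := by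
      rw [hcompl]; exact hfin.preimage (hsninj.injOn)
    have hK0 : U0ᶜ.ncard ≤ Uᶜ.ncard := by
      refine Set.ncard_le_ncard_of_injOn sn (fun a ha => ha) (hsninj.injOn) hfin
    obtain ⟨hMfin0, hM0⟩ := IH U0 hU0 hfin0
    -- the splitting of MinF U
    have hsingle : ∀ (i : Fin n) (j : Fin n),
        (Pi.single (Fin.castSucc i) 1 : Fin (n+1) → ℕ) (Fin.castSucc j)
          = (Pi.single i 1 : Fin n → ℕ) j := by
      intro i j
      by_cases hj : j = i
      · subst hj; simp
      · rw [Pi.single_eq_of_ne hj, Pi.single_eq_of_ne (fun h => hj (Fin.castSucc_injective n h))]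
    have hG0 : {x ∈ MinF U | x (Fin.last n) = 0} ⊆ sn '' (MinF U0) := by
      rintro x ⟨hx, hx0⟩
      have hxs : sn (Fin.init x) = x := by
        show Fin.snoc (Fin.init x) 0 = x
        rw [← hx0]; exact Fin.snoc_init_self x
      refine ⟨Fin.init x, ⟨?_, ?_⟩, hxs⟩
      · show sn (Fin.init x) ∈ U
        rw [hxs]; exact hx.1
      · intro i hi
        have key : sn (Fin.init x - Pi.single i 1) = x - Pi.single (Fin.castSucc i) 1 := by
          funext k
          induction k using Fin.lastCases with
          | last =>
            have h1 : (Pi.single (Fin.castSucc i) 1 : Fin (n+1) → ℕ) (Fin.last n) = 0 :=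
              Pi.single_eq_of_ne (Fin.castSucc_lt_last i).ne' 1
            simp [hsn, Fin.snoc_last, Pi.sub_apply, hx0, h1]
          | cast j =>
            simp only [hsn, Fin.snoc_castSucc, Pi.sub_apply, Fin.init, hsingle i j]
        show sn (Fin.init x - Pi.single i 1) ∉ U
        rw [key]
        exact hx.2 (Fin.castSucc i) hi
    have hG1 : {x ∈ MinF U | x (Fin.last n) ≠ 0} ⊆
        (fun c => Fin.snoc (Fin.init c) (c (Fin.last n) + 1)) '' Uᶜ := by
      rintro x ⟨hx, hxl⟩
      have hpos : 0 < x (Fin.last n) := Nat.pos_of_ne_zero hxl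
      refine ⟨x - Pi.single (Fin.last n) 1, hx.2 (Fin.last n) hpos, ?_⟩
      funext k
      induction k using Fin.lastCases with
      | last =>
        simp only [Fin.snoc_last, Pi.sub_apply, Pi.single_eq_same]
        omega
      | cast j =>
        have h1 : (Pi.single (Fin.last n) 1 : Fin (n+1) → ℕ) (Fin.castSucc j) = 0 :=
          Pi.single_eq_of_ne (Fin.castSucc_lt_last j).ne 1
        simp [Fin.snoc_castSucc, Fin.init, Pi.sub_apply, h1]
    have hsplit : MinF U = {x ∈ MinF U | x (Fin.last n) = 0} ∪ {x ∈ MinF U | x (Fin.last n) ≠ 0} := by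
      ext x; by_cases h : x (Fin.last n) = 0 <;> simp [h]
    have hfinim1 : (sn '' (MinF U0)).Finite := hMfin0.image _
    have hfinim2 : ((fun c => Fin.snoc (Fin.init c) (c (Fin.last n) + 1)) '' Uᶜ).Finite :=
      hfin.image _
    have hMfin : (MinF U).Finite := by
      rw [hsplit]
      exact ((hfinim1.subset hG0).union (hfinim2.subset hG1))
    refine ⟨hMfin, ?_⟩
    have hc0 : {x ∈ MinF U | x (Fin.last n) = 0}.ncard ≤ (MinF U0).ncard :=
      le_trans (Set.ncard_le_ncard hG0 hfinim1) (Set.ncard_image_le hMfin0)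
    have hc1 : {x ∈ MinF U | x (Fin.last n) ≠ 0}.ncard ≤ Uᶜ.ncard :=
      le_trans (Set.ncard_le_ncard hG1 hfinim2) (Set.ncard_image_le hfin)
    calc (MinF U).ncard ≤ {x ∈ MinF U | x (Fin.last n) = 0}.ncard
          + {x ∈ MinF U | x (Fin.last n) ≠ 0}.ncard := by
            conv_lhs => rw [hsplit]
            exact Set.ncard_union_le _ _
      _ ≤ ((n-1) * U0ᶜ.ncard + 1) + Uᶜ.ncard := Nat.add_le_add (le_trans hc0 hM0) hc1
      _ ≤ ((n-1) * Uᶜ.ncard + 1) + Uᶜ.ncard := by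
            exact Nat.add_le_add (Nat.add_le_add_right (Nat.mul_le_mul_left (k := n - 1) hK0) 1) le_rfl
      _ ≤ (n + 1 - 1) * Uᶜ.ncard + 1 := by
            have h : (n-1) * Uᶜ.ncard + Uᶜ.ncard = n * Uᶜ.ncard := by
              calc (n-1) * Uᶜ.ncard + Uᶜ.ncard = ((n-1) + 1) * Uᶜ.ncard := by ring
                _ = n * Uᶜ.ncard := by rw [Nat.sub_add_cancel hn1]
            rw [Nat.add_sub_cancel]
            linarith [h]




variable {n : ℕ} {F : Type} [Field F]

lemma upper_mem (I : Ideal (MvPolynomial (Fin n) F)) {a b : Fin n →₀ ℕ}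
    (h : monomial a (1:F) ∈ I) (hab : a ≤ b) : monomial b (1:F) ∈ I := by
  have heq : monomial b (1:F) = monomial (b - a) (1:F) * monomial a (1:F) := by
    rw [monomial_mul, one_mul, tsub_add_cancel_of_le hab]
  rw [heq]
  exact Ideal.mul_mem_left I _ h

lemma mem_of_mem_support (I : Ideal (MvPolynomial (Fin n) F)) (hI : IsMonomialIdeal I)
    {p : MvPolynomial (Fin n) F} (hp : p ∈ I) {m : Fin n →₀ ℕ} (hm : m ∈ p.support) :
    monomial m (1:F) ∈ I := by
  obtain ⟨S₀, rfl⟩ := hI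
  obtain ⟨s, hs, hsm⟩ := mem_ideal_span_monomial_image.mp hp m hm
  exact upper_mem _ (Ideal.subset_span ⟨s, hs, rfl⟩) hsm

lemma ncard_eq_finrank (I : Ideal (MvPolynomial (Fin n) F)) (hI : IsMonomialIdeal I) :
    {a : Fin n →₀ ℕ | monomial a (1:F) ∉ I}.ncard
      = Module.finrank F (MvPolynomial (Fin n) F ⧸ I) := by
  classical
  set S : Set (Fin n →₀ ℕ) := {a | monomial a (1:F) ∉ I} with hS
  set mkL : MvPolynomial (Fin n) F →ₗ[F] MvPolynomial (Fin n) F ⧸ I :=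
    (Ideal.Quotient.mkₐ F I).toLinearMap with hmkL
  set v : S → MvPolynomial (Fin n) F ⧸ I := fun a => mkL (monomial (a : Fin n →₀ ℕ) 1) with hv
  have hw : LinearIndependent F (fun a : S => monomial (a : Fin n →₀ ℕ) (1:F)) := by
    have := (basisMonomials (Fin n) F).linearIndependent.comp
      (Subtype.val : S → (Fin n →₀ ℕ)) Subtype.val_injective
    rwa [coe_basisMonomials] at this
  have hsupp : ∀ x ∈ Submodule.span F
      (Set.range (fun a : S => monomial (a : Fin n →₀ ℕ) (1:F))),
      ∀ m ∈ (x : MvPolynomial (Fin n) F).support, m ∈ S := by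
    intro x hx
    induction hx using Submodule.span_induction with
    | mem x hxx =>
      obtain ⟨a, rfl⟩ := hxx
      intro m hm
      rw [support_monomial, if_neg (one_ne_zero)] at hm
      rw [Finset.mem_singleton] at hm
      subst hm; exact a.2
    | zero => intro m hm; simp at hm
    | add x y _ _ hx hy =>
      intro m hm
      rcases Finset.mem_union.mp (MvPolynomial.support_add hm) with h | h
      · exact hx m h
      · exact hy m h
    | smul c x _ hx =>
      intro m hm
      exact hx m (Finsupp.support_smul hm)
  have hdisj : Disjoint (Submodule.span F
      (Set.range (fun a : S => monomial (a : Fin n →₀ ℕ) (1:F)))) (LinearMap.ker mkL) := by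
    rw [Submodule.disjoint_def]
    intro x hx hker
    have hxI : x ∈ I := by
      have : Ideal.Quotient.mk I x = 0 := hker
      exact (Ideal.Quotient.eq_zero_iff_mem).mp this
    by_contra hne
    obtain ⟨m, hm⟩ := (MvPolynomial.support_nonempty.mpr hne)
    exact (hsupp x hx m hm) (mem_of_mem_support I hI hxI hm)
  have hli : LinearIndependent F v := hw.map hdisj
  have hspan : ⊤ ≤ Submodule.span F (Set.range v) := by
    have hb := (basisMonomials (Fin n) F).span_eq
    rw [coe_basisMonomials] at hb
    have hsurj : Function.Surjective mkL := Ideal.Quotient.mk_surjective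
    have h1 : Submodule.span F (Set.range (fun a : Fin n →₀ ℕ => mkL (monomial a (1:F)))) = ⊤ := by
      calc Submodule.span F (Set.range fun a : Fin n →₀ ℕ => mkL (monomial a (1:F)))
          = Submodule.span F (mkL '' Set.range fun a : Fin n →₀ ℕ => monomial a (1:F)) := by
            rw [← Set.range_comp]; rfl
        _ = Submodule.map mkL (Submodule.span F (Set.range fun a : Fin n →₀ ℕ => monomial a (1:F))) :=
            (Submodule.map_span _ _).symm
        _ = Submodule.map mkL ⊤ := by rw [hb]
        _ = ⊤ := by rw [Submodule.map_top, LinearMap.range_eq_top.mpr hsurj]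
    rw [← h1]
    refine Submodule.span_le.mpr ?_
    rintro x ⟨a, rfl⟩
    by_cases ha : monomial a (1:F) ∈ I
    · have h0 : mkL (monomial a 1) = 0 := Ideal.Quotient.eq_zero_iff_mem.mpr ha
      show mkL (monomial a 1) ∈ _
      rw [h0]; exact Submodule.zero_mem _
    · exact Submodule.subset_span ⟨⟨a, ha⟩, rfl⟩
  have hrank := (Module.Basis.mk hli hspan).mk_eq_rank''
  calc S.ncard = Nat.card S := (Nat.card_coe_set_eq S).symm
    _ = Cardinal.toNat (Cardinal.mk S) := rfl
    _ = Cardinal.toNat (Module.rank F (MvPolynomial (Fin n) F ⧸ I)) := by rw [hrank]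
    _ = Module.finrank F (MvPolynomial (Fin n) F ⧸ I) := rfl


/-- If `I` is a nonzero monomial ideal with `dim F[X]/I = K ≥ 1`, its minimal monomial
generating set `G` satisfies `|G| ≤ (n-1)K + 1`. -/
theorem statement_6 (F : Type) [Field F] (n K : ℕ) (hn : 1 ≤ n) (hK : 1 ≤ K)
    (I : Ideal (MvPolynomial (Fin n) F)) (hI : IsMonomialIdeal I) (hne : I ≠ ⊥)
    (hdim : Module.finrank F (MvPolynomial (Fin n) F ⧸ I) = K) :
    (minGenSet I).ncard ≤ (n - 1) * K + 1 := by
  classical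
  set Ufs : Set (Fin n →₀ ℕ) := {a | monomial a (1:F) ∈ I} with hUfs
  have hcompl : {a : Fin n →₀ ℕ | monomial a (1:F) ∉ I} = Ufsᶜ := rfl
  have hncard : Ufsᶜ.ncard = K := by
    rw [← hcompl, ncard_eq_finrank I hI, hdim]
  have hfinc : Ufsᶜ.Finite := by
    by_contra h
    rw [Set.Infinite.ncard h] at hncard
    omega
  set e : (Fin n →₀ ℕ) ≃ (Fin n → ℕ) := Finsupp.equivFunOnFinite with he
  set U : Set (Fin n → ℕ) := e.symm ⁻¹' Ufs with hU
  have hcoe : ∀ x : Fin n → ℕ, ⇑(e.symm x) = x := fun x => rfl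
  have hupperU : ∀ x ∈ U, ∀ y, x ≤ y → y ∈ U := by
    intro x hx y hxy
    exact upper_mem I hx (Finsupp.le_def.mpr (fun i => hxy i))
  have hUc : Uᶜ = e.symm ⁻¹' (Ufsᶜ) := rfl
  have hfinUc : Uᶜ.Finite := hfinc.preimage (e.symm.injective.injOn)
  have hUcncard : Uᶜ.ncard = K := by
    rw [hUc, ← Equiv.image_eq_preimage_symm, Set.ncard_image_of_injective _ e.injective, hncard]
  -- identification of the minimal sets
  have hsub : ∀ (a : Fin n →₀ ℕ) (i : Fin n),
      e (a - Finsupp.single i 1) = e a - Pi.single i 1 := by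
    intro a i
    funext j
    show ((a - Finsupp.single i 1 : Fin n →₀ ℕ) : Fin n → ℕ) j
      = (a : Fin n →₀ ℕ) j - (Pi.single i 1 : Fin n → ℕ) j
    rw [Finsupp.tsub_apply, ← Finsupp.single_eq_pi_single]
  have hmin : minGenSet I = e ⁻¹' (MinF U) := by
    ext a
    simp only [minGenSet, MinF, Set.mem_setOf_eq, Set.mem_preimage]
    constructor
    · rintro ⟨h1, h2⟩
      refine ⟨by simpa [hU, hUfs] using h1, ?_⟩
      intro i hi
      have : e a - Pi.single i 1 = e (a - Finsupp.single i 1) := (hsub a i).symm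
      rw [this]
      simpa [hU, hUfs] using h2 i hi
    · rintro ⟨h1, h2⟩
      refine ⟨by simpa [hU, hUfs] using h1, ?_⟩
      intro i hi
      have := h2 i hi
      rw [← hsub a i] at this
      simpa [hU, hUfs] using this
  have hcard2 : (minGenSet I).ncard = (MinF U).ncard := by
    rw [hmin, ← Equiv.symm_symm e, ← Equiv.image_eq_preimage_symm,
      Set.ncard_image_of_injective _ e.symm.injective]
  obtain ⟨-, hbound⟩ := comb_main n U hupperU hfinUc
  rw [hcard2, ← hUcncard]
  exact hbound
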